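/- arXiv:2003.09672 — 2 statements merged into one kernel-verified Lean document; each statement's English description precedes it below -/
import Mathlib

section
/- Let G be a finite group and ψ a 𝕋-valued 2-cocycle on G. Then: (i) for every g ∈ G the map β^ψ_g : C_G(g) → 𝕋, h ↦ ψ(g,h)·conj(ψ(h,g)), is a group homomorphism from the centralizer C_G(g) to 𝕋; (ii) if ψ' is a 2-cocycle cohomologous to ψ, then β^{ψ'}_g = β^ψ_g for every g ∈ G; (iii) for any two 2-cocycles ψ, ψ' on G one has β^{ψ·ψ'}_g = β^ψ_g · β^{ψ'}_g for every g ∈ G. In particular, ψ ↦ (β^ψ_g)_{g∈G} induces a well-defined group homomorphism from the second cohomology group H²(G;𝕋) to the product over g ∈ G of the character groups Hom(C_G(g),𝕋). -/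
open ComplexConjugate

/-- `ψ` is a `𝕋`-valued 2-cocycle on the group `G`. -/
def IsCocycle {G : Type*} [Group G] (ψ : G → G → ℂ) : Prop :=
  (∀ g h, ‖ψ g h‖ = 1) ∧
    ∀ g h k, ψ g h * ψ (g * h) k = ψ h k * ψ g (h * k)

/-- `ψ` is a coboundary. -/
def IsCoboundary {G : Type*} [Group G] (ψ : G → G → ℂ) : Prop :=
  ∃ f : G → ℂ, (∀ g, ‖f g‖ = 1) ∧
    ∀ g h, ψ g h = f g * f h * conj (f (g * h))

/-- Two 2-cocycles are cohomologous if their pointwise quotient is a coboundary. -/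
def Cohomologous {G : Type*} [Group G] (ψ ψ' : G → G → ℂ) : Prop :=
  IsCoboundary fun g h => ψ g h / ψ' g h

/-- `β^ψ_g(h) = ψ(g,h) · conj (ψ(h,g))`. -/
noncomputable def beta {G : Type*} [Group G] (ψ : G → G → ℂ) (g h : G) : ℂ :=
  ψ g h * conj (ψ h g)

lemma conj_eq_inv_of_abs_one {z : ℂ} (hz : ‖z‖ = 1) : conj z = z⁻¹ :=
  (Complex.inv_eq_conj hz).symm

lemma ne_zero_of_abs_one {z : ℂ} (hz : ‖z‖ = 1) : z ≠ 0 := by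
  intro h; simp [h] at hz

/-- (i) `β^ψ_g` is a group homomorphism from the centralizer `C_G(g)` to `𝕋`;
(ii) cohomologous cocycles give the same `β`; (iii) `β^{ψ·ψ'} = β^ψ · β^{ψ'}`.
Hence `ψ ↦ β^ψ` induces a group homomorphism
`H²(G;𝕋) → ∏_g Hom(C_G(g),𝕋)`. -/
theorem stmt0 {G : Type*} [Group G] [Fintype G] (ψ : G → G → ℂ) (hψ : IsCocycle ψ) :
    (∀ g : G,
      (∀ h ∈ Subgroup.centralizer {g}, ‖beta ψ g h‖ = 1) ∧
      (∀ h ∈ Subgroup.centralizer {g}, ∀ k ∈ Subgroup.centralizer {g},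
        beta ψ g (h * k) = beta ψ g h * beta ψ g k)) ∧
    (∀ ψ' : G → G → ℂ, IsCocycle ψ' → Cohomologous ψ ψ' →
      ∀ g : G, ∀ h ∈ Subgroup.centralizer {g}, beta ψ' g h = beta ψ g h) ∧
    (∀ ψ' : G → G → ℂ, IsCocycle ψ' →
      ∀ g h : G, beta (fun a b => ψ a b * ψ' a b) g h = beta ψ g h * beta ψ' g h) := by
  obtain ⟨habs, hco⟩ := hψ
  have hne : ∀ a b, ψ a b ≠ 0 := fun a b => ne_zero_of_abs_one (habs a b)
  have hcj : ∀ a b, conj (ψ a b) = (ψ a b)⁻¹ := fun a b => conj_eq_inv_of_abs_one (habs a b)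
  refine ⟨fun g => ⟨?_, ?_⟩, ?_, ?_⟩
  · intro h _
    simp [beta, map_mul, Complex.norm_conj, habs]
  · intro h hh k hk
    rw [Subgroup.mem_centralizer_singleton_iff] at hh hk
    have key : ψ g (h * k) * (ψ h g * ψ k g) * ψ h k =
        ψ g h * ψ g k * ψ (h * k) g * ψ h k := by
      have h1 := hco g h k
      have h2 := hco h k g
      have h3 := hco h g k
      rw [hh, ← hk] at h3
      linear_combination (-(ψ h g * ψ k g)) * h1 + (-(ψ g h * ψ g k)) * h2 +
        (ψ g h * ψ k g) * h3
    have key2 := mul_right_cancel₀ (hne h k) key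
    simp only [beta, hcj]
    field_simp [hne (h * k) g, hne h g, hne k g]
    linear_combination key2
  · rintro ψ' ⟨habs', hco'⟩ ⟨f, hf1, hf2⟩ g h hh
    rw [Subgroup.mem_centralizer_singleton_iff] at hh
    have hne' : ∀ a b, ψ' a b ≠ 0 := fun a b => ne_zero_of_abs_one (habs' a b)
    have hcj' : ∀ a b, conj (ψ' a b) = (ψ' a b)⁻¹ := fun a b =>
      conj_eq_inv_of_abs_one (habs' a b)
    have hfne : ∀ a, f a ≠ 0 := fun a => ne_zero_of_abs_one (hf1 a)
    have hfcj : ∀ a, conj (f a) = (f a)⁻¹ := fun a => conj_eq_inv_of_abs_one (hf1 a)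
    have d1 := hf2 g h
    have d2 := hf2 h g
    simp only [hfcj] at d1 d2
    rw [div_eq_iff (hne' g h)] at d1
    rw [hh, div_eq_iff (hne' h g)] at d2
    simp only [beta, hcj, hcj']
    rw [← div_eq_mul_inv, ← div_eq_mul_inv, div_eq_div_iff (hne' h g) (hne h g)]
    linear_combination ψ' g h * d2 - ψ' h g * d1
  · rintro ψ' ⟨habs', hco'⟩ g h
    simp only [beta, map_mul]
    ring
end

section
/- Let J be a finite abelian group, let ⟨·,·⟩ : J × J → 𝕋 be a symmetric pairing on J, and let q : J → 𝕋 satisfy q(-j) = q(j) and ⟨j,j'⟩ = q(j)·q(j')·conj(q(j+j')) for all j,j' ∈ J. Call j ∈ J quaternionic if q(j)^N = -1, where N is the order of j in J. Then: (i) J contains no quaternionic element if and only if there exists a pairing ε on J satisfying ⟨j,j'⟩·ε(j,j')·ε(j',j) = 1 and ε(j,j) = q(j) for all j,j' ∈ J; (ii) if ε⁰ is one pairing satisfying these two conditions, then a pairing ε satisfies them if and only if the pairing (j,j') ↦ ε(j,j')·conj(ε⁰(j,j')) is an alternating pairing on J. -/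
open ComplexConjugate

/-- A `𝕋`-valued pairing on `J`: multiplicative in each argument. -/
def IsPairing {J : Type*} [AddCommGroup J] (γ : J → J → ℂ) : Prop :=
  (∀ g h, ‖γ g h‖ = 1) ∧
    (∀ g g' h, γ (g + g') h = γ g h * γ g' h) ∧
    (∀ g h h', γ g (h + h') = γ g h * γ g h')

/-- An alternating pairing: a pairing with `γ(g,g) = 1` for all `g`. -/
def IsAlternatingPairing {J : Type*} [AddCommGroup J] (γ : J → J → ℂ) : Prop :=
  IsPairing γ ∧ ∀ g, γ g g = 1

namespace Stmt6Aux

lemma unit_mul_conj {z : ℂ} (hz : ‖z‖ = 1) : z * conj z = 1 := by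
  rw [Complex.mul_conj, Complex.normSq_eq_norm_sq, hz]; norm_num

lemma unit_ne_zero {z : ℂ} (hz : ‖z‖ = 1) : z ≠ 0 := by
  intro h; rw [h] at hz; simp at hz

variable {J : Type*} [AddCommGroup J]

lemma pairing_zero_left {γ : J → J → ℂ} (hγ : IsPairing γ) (y : J) : γ 0 y = 1 := by
  have h := hγ.2.1 0 0 y
  rw [add_zero] at h
  have hne := unit_ne_zero (hγ.1 0 y)
  exact (mul_left_cancel₀ hne ((mul_one _).trans h)).symm

lemma pairing_zero_right {γ : J → J → ℂ} (hγ : IsPairing γ) (y : J) : γ y 0 = 1 := by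
  have h := hγ.2.2 y 0 0
  rw [add_zero] at h
  have hne := unit_ne_zero (hγ.1 y 0)
  exact (mul_left_cancel₀ hne ((mul_one _).trans h)).symm

lemma pairing_nsmul_left {γ : J → J → ℂ} (hγ : IsPairing γ) (m : ℕ) (x y : J) :
    γ (m • x) y = γ x y ^ m := by
  induction m with
  | zero => simp [pairing_zero_left hγ]
  | succ k ih => rw [succ_nsmul, hγ.2.1, ih, pow_succ]

lemma pairing_nsmul_right {γ : J → J → ℂ} (hγ : IsPairing γ) (m : ℕ) (x y : J) :
    γ x (m • y) = γ x y ^ m := by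
  induction m with
  | zero => simp [pairing_zero_right hγ]
  | succ k ih => rw [succ_nsmul, hγ.2.2, ih, pow_succ]

lemma pow_mod_eq {c : ℂ} {m : ℕ} (hc : c ^ m = 1) (a : ℕ) : c ^ (a % m) = c ^ a := by
  conv_rhs => rw [← Nat.mod_add_div a m]
  rw [pow_add, pow_mul, hc, one_pow, mul_one]

lemma zmod_pow_add {m : ℕ} [NeZero m] {c : ℂ} (hc : c ^ m = 1) (A B : ZMod m) :
    c ^ (A + B).val = c ^ A.val * c ^ B.val := by
  rw [ZMod.val_add, pow_mod_eq hc, pow_add]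

section QFacts

variable {γ : J → J → ℂ} {q : J → ℂ}

lemma q_zero (hγ : IsPairing γ) (hqabs : ∀ j, ‖q j‖ = 1)
    (hqγ : ∀ j j', γ j j' = q j * q j' * conj (q (j + j'))) : q 0 = 1 := by
  have h := hqγ 0 0
  rw [add_zero, pairing_zero_left hγ, mul_assoc, unit_mul_conj (hqabs 0), mul_one] at h
  exact h.symm

lemma q_add (hqabs : ∀ j, ‖q j‖ = 1)
    (hqγ : ∀ j j', γ j j' = q j * q j' * conj (q (j + j'))) (u v : J) :
    q (u + v) = q u * q v * conj (γ u v) := by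
  have h : conj (γ u v) = conj (q u) * conj (q v) * q (u + v) := by
    rw [hqγ u v, map_mul, map_mul, Complex.conj_conj]
  rw [h]
  have h3 := unit_mul_conj (hqabs u)
  have h4 := unit_mul_conj (hqabs v)
  linear_combination (-(q v * conj (q v) * q (u + v))) * h3 - q (u + v) * h4

lemma q_two (hγ : IsPairing γ) (hqabs : ∀ j, ‖q j‖ = 1)
    (hqneg : ∀ j, q (-j) = q j)
    (hqγ : ∀ j j', γ j j' = q j * q j' * conj (q (j + j'))) (u : J) :
    q (u + u) = q u ^ 4 := by
  have hq0 : q 0 = 1 := q_zero hγ hqabs hqγ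
  have hA := hγ.2.1 u u (-u)
  have hB := hqγ u (-u)
  rw [add_neg_cancel, hq0, hqneg] at hB
  have hC := hqγ (u + u) (-u)
  rw [hqneg, show u + u + -u = u by abel] at hC
  have hu := unit_mul_conj (hqabs u)
  -- hA : γ (u+u) (-u) = γ u (-u) * γ u (-u)
  -- hB : γ u (-u) = q u * q u * conj 1
  -- hC : γ (u+u) (-u) = q (u+u) * q u * conj (q u)
  have : q (u + u) * (q u * conj (q u)) = (q u * q u * conj 1) * (q u * q u * conj 1) := by
    rw [← mul_assoc, ← hC, hA, hB]
  rw [hu, mul_one, map_one] at this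
  rw [this]; ring

lemma gamma_diag (hγ : IsPairing γ) (hqabs : ∀ j, ‖q j‖ = 1)
    (hqneg : ∀ j, q (-j) = q j)
    (hqγ : ∀ j j', γ j j' = q j * q j' * conj (q (j + j'))) (u : J) :
    γ u u = conj (q u ^ 2) := by
  have h := hqγ u u
  rw [q_two hγ hqabs hqneg hqγ u] at h
  have hu := unit_mul_conj (hqabs u)
  rw [h, map_pow, map_pow]
  linear_combination (conj (q u))^2 * (q u * conj (q u) + 1) * hu

lemma conj_gamma_diag (hγ : IsPairing γ) (hqabs : ∀ j, ‖q j‖ = 1)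
    (hqneg : ∀ j, q (-j) = q j)
    (hqγ : ∀ j j', γ j j' = q j * q j' * conj (q (j + j'))) (u : J) :
    conj (γ u u) = q u ^ 2 := by
  rw [gamma_diag hγ hqabs hqneg hqγ u, Complex.conj_conj]

lemma q_nsmul (hγ : IsPairing γ) (hqabs : ∀ j, ‖q j‖ = 1)
    (hqneg : ∀ j, q (-j) = q j)
    (hqγ : ∀ j j', γ j j' = q j * q j' * conj (q (j + j'))) (m : ℕ) (u : J) :
    q (m • u) = q u ^ (m * m) := by
  induction m with
  | zero => simpa using q_zero hγ hqabs hqγ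
  | succ k ih =>
    rw [succ_nsmul, q_add hqabs hqγ, ih, pairing_nsmul_left hγ, map_pow,
      conj_gamma_diag hγ hqabs hqneg hqγ]
    rw [← pow_mul, ← pow_succ, ← pow_add]
    congr 1; ring

end QFacts
end Stmt6Aux

namespace Stmt6Aux

lemma step (J : Type*) [AddCommGroup J] (n₀ : ℕ) [NeZero n₀]
    (K : Type*) [AddCommGroup K]
    (h : J ≃+ ZMod n₀ × K)
    (γ : J → J → ℂ) (q : J → ℂ)
    (hγ : IsPairing γ) (hsym : ∀ j j', γ j j' = γ j' j)
    (hqabs : ∀ j, ‖q j‖ = 1) (hqneg : ∀ j, q (-j) = q j)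
    (hqγ : ∀ j j', γ j j' = q j * q j' * conj (q (j + j')))
    (hpow : ∀ j, q j ^ addOrderOf j = 1)
    (εK : K → K → ℂ) (hεKpair : IsPairing εK)
    (hεKmul : ∀ x y, εK x y * εK y x = conj (γ (h.symm (0, x)) (h.symm (0, y))))
    (hεKdiag : ∀ x, εK x x = q (h.symm (0, x))) :
    ∃ ε : J → J → ℂ, IsPairing ε ∧ (∀ j j', ε j j' * ε j' j = conj (γ j j')) ∧
      (∀ j, ε j j = q j) := by
  set E : J := h.symm (1, 0) with hEdef
  have hgadd : ∀ x y : K, h.symm (0, x) + h.symm (0, y) = h.symm (0, x + y) := by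
    intro x y; rw [← map_add, Prod.mk_add_mk, add_zero]
  have hE0 : n₀ • E = 0 := by
    rw [hEdef, ← map_nsmul, Prod.smul_mk, smul_zero]
    have h1 : n₀ • (1 : ZMod n₀) = 0 := by
      simp [nsmul_eq_mul, ZMod.natCast_self]
    rw [h1, show ((0 : ZMod n₀), (0 : K)) = 0 from rfl, map_zero]
  have hqE : q E ^ n₀ = 1 := by
    obtain ⟨c, hc⟩ := addOrderOf_dvd_of_nsmul_eq_zero hE0
    rw [hc, pow_mul, hpow E, one_pow]
  have hqEpow : ∀ m : ℕ, (q E ^ m) ^ n₀ = 1 := fun m => by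
    rw [← pow_mul, mul_comm, pow_mul, hqE, one_pow]
  have hγE : ∀ y : J, γ E y ^ n₀ = 1 := fun y => by
    rw [← pairing_nsmul_left hγ, hE0, pairing_zero_left hγ]
  have hγEc : ∀ y : J, conj (γ E y) ^ n₀ = 1 := fun y => by
    rw [← map_pow, hγE, map_one]
  have hdec : ∀ j : J, j = (h j).1.val • E + h.symm (0, (h j).2) := by
    intro j
    have h1 : ((h j).1.val • ((1 : ZMod n₀), (0 : K)) + ((0 : ZMod n₀), (h j).2)) = h j := by
      have h2 : ((h j).1.val) • (1 : ZMod n₀) = (h j).1 := by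
        rw [nsmul_eq_mul, mul_one]; exact ZMod.natCast_rightInverse _
      rw [Prod.smul_mk, smul_zero, Prod.mk_add_mk, add_zero, zero_add, h2]
    conv_lhs => rw [← h.symm_apply_apply j, ← h1]
    rw [map_add, map_nsmul, ← hEdef]
  refine ⟨fun j j' => εK (h j).2 (h j').2 * q E ^ ((h j).1.val * (h j').1.val) *
      conj (γ E (h.symm (0, (h j').2))) ^ (h j).1.val, ⟨?_, ?_, ?_⟩, ?_, ?_⟩
  · intro j j'
    simp only [norm_mul, norm_pow, Complex.norm_conj]
    rw [hεKpair.1, hqabs, hγ.1, one_pow, one_pow]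
    norm_num
  · intro g g' j'
    simp only [map_add, Prod.fst_add, Prod.snd_add]
    rw [hεKpair.2.1]
    have e1 : q E ^ (((h g).1 + (h g').1).val * (h j').1.val) =
        q E ^ ((h g).1.val * (h j').1.val) * q E ^ ((h g').1.val * (h j').1.val) := by
      rw [pow_mul', pow_mul', pow_mul']
      exact zmod_pow_add (hqEpow _) _ _
    rw [e1, zmod_pow_add (hγEc _) (h g).1 (h g').1]
    ring
  · intro g j' j''
    simp only [map_add, Prod.fst_add, Prod.snd_add]
    rw [hεKpair.2.2]
    have e1 : q E ^ ((h g).1.val * ((h j').1 + (h j'').1).val) =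
        q E ^ ((h g).1.val * (h j').1.val) * q E ^ ((h g).1.val * (h j'').1.val) := by
      rw [pow_mul, pow_mul, pow_mul]
      exact zmod_pow_add (hqEpow _) _ _
    have e3 : conj (γ E (h.symm (0, (h j').2 + (h j'').2))) =
        conj (γ E (h.symm (0, (h j').2))) * conj (γ E (h.symm (0, (h j'').2))) := by
      rw [← hgadd, hγ.2.2, map_mul]
    rw [e1, e3, mul_pow]
    ring
  · intro j j'
    dsimp only
    have k1 := hεKmul (h j).2 (h j').2
    have k2 : q E ^ ((h j).1.val * (h j').1.val) * q E ^ ((h j').1.val * (h j).1.val) =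
        (conj (γ E E) ^ (h j').1.val) ^ (h j).1.val := by
      rw [conj_gamma_diag hγ hqabs hqneg hqγ, ← pow_mul, ← pow_mul, ← pow_add]
      congr 1; ring
    conv_rhs => rw [hdec j, hdec j']
    rw [hγ.2.1, hγ.2.2, hγ.2.2, pairing_nsmul_left hγ, pairing_nsmul_left hγ,
      pairing_nsmul_right hγ, pairing_nsmul_right hγ, hsym (h.symm (0, (h j).2)) E]
    simp only [map_mul, map_pow]
    linear_combination (q E ^ ((h j).1.val * (h j').1.val) * q E ^ ((h j').1.val * (h j).1.val) *
        conj (γ E (h.symm (0, (h j').2))) ^ (h j).1.val *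
        conj (γ E (h.symm (0, (h j).2))) ^ (h j').1.val) * k1 +
      (conj (γ (h.symm (0, (h j).2)) (h.symm (0, (h j').2))) *
        conj (γ E (h.symm (0, (h j').2))) ^ (h j).1.val *
        conj (γ E (h.symm (0, (h j).2))) ^ (h j').1.val) * k2
  · intro j
    dsimp only
    conv_rhs => rw [hdec j]
    rw [q_add hqabs hqγ, q_nsmul hγ hqabs hqneg hqγ, pairing_nsmul_left hγ, map_pow,
      ← hεKdiag]
    ring

end Stmt6Aux

open scoped DirectSum
namespace Stmt6Aux

lemma buildEps (N : ℕ) : ∀ (J : Type) [AddCommGroup J] [Fintype J],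
    Fintype.card J ≤ N →
    ∀ (γ : J → J → ℂ) (q : J → ℂ), IsPairing γ → (∀ j j', γ j j' = γ j' j) →
    (∀ j, ‖q j‖ = 1) → (∀ j, q (-j) = q j) →
    (∀ j j', γ j j' = q j * q j' * conj (q (j + j'))) →
    (∀ j, q j ^ addOrderOf j = 1) →
    ∃ ε : J → J → ℂ, IsPairing ε ∧ (∀ j j', ε j j' * ε j' j = conj (γ j j')) ∧
      (∀ j, ε j j = q j) := by
  induction N with
  | zero =>
    intro J _ _ hcard
    exact absurd hcard (by have : 0 < Fintype.card J := @Fintype.card_pos _ _ ⟨0⟩; omega)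
  | succ N ih =>
    intro J _ _ hcard γ q hγ hsym hqabs hqneg hqγ hpow
    classical
    obtain ⟨ι, hfin, n, hn, ⟨f⟩⟩ := AddCommGroup.equiv_directSum_zmod_of_finite' J
    haveI : ∀ i, NeZero (n i) := fun i => ⟨by have := hn i; omega⟩
    by_cases hι : IsEmpty ι
    · haveI : Subsingleton (⨁ i, ZMod (n i)) :=
        ⟨fun a b => DFinsupp.ext fun i => (hι.false i).elim⟩
      haveI : Subsingleton J := f.toEquiv.subsingleton
      refine ⟨fun _ _ => 1, ⟨fun _ _ => by simp, fun _ _ _ => by ring, fun _ _ _ => by ring⟩,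
        fun j j' => ?_, fun j => ?_⟩
      · rw [Subsingleton.elim j 0, pairing_zero_left hγ]; simp
      · rw [Subsingleton.elim j 0, q_zero hγ hqabs hqγ]
    · rw [not_isEmpty_iff] at hι
      obtain ⟨i₀⟩ := hι
      let e : Option {i : ι // i ≠ i₀} ≃ ι := Equiv.optionSubtypeNe i₀
      haveI : Fintype (⨁ (k : {i : ι // i ≠ i₀}), ZMod (n k.1)) :=
        (inferInstance : Fintype (Π₀ (k : {i : ι // i ≠ i₀}), ZMod (n k.1)))
      let h : J ≃+ ZMod (n i₀) × ⨁ (k : {i : ι // i ≠ i₀}), ZMod (n k.1) :=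
        f.trans ((DirectSum.equivCongrLeft e.symm).trans DirectSum.addEquivProdDirectSum)
      -- cardinality bound
      have hc1 : Fintype.card J =
          Fintype.card (ZMod (n i₀)) * Fintype.card (⨁ (k : {i : ι // i ≠ i₀}), ZMod (n k.1)) := by
        rw [← Fintype.card_prod]; exact Fintype.card_congr h.toEquiv
      have hc2 : Fintype.card (ZMod (n i₀)) = n i₀ := ZMod.card _
      have hc3 : 0 < Fintype.card (⨁ (k : {i : ι // i ≠ i₀}), ZMod (n k.1)) :=
        @Fintype.card_pos _ _ ⟨0⟩
      have hcardK : Fintype.card (⨁ (k : {i : ι // i ≠ i₀}), ZMod (n k.1)) ≤ N := by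
        have := hn i₀; nlinarith
      -- the injection K →+ J
      let gK : (⨁ (k : {i : ι // i ≠ i₀}), ZMod (n k.1)) →+ J :=
        h.symm.toAddMonoidHom.comp (AddMonoidHom.inr _ _)
      have hgK : ∀ x, gK x = h.symm (0, x) := fun x => rfl
      have hgKinj : Function.Injective gK := by
        intro a b hab
        have h2 : ((0 : ZMod (n i₀)), a) = (0, b) := h.symm.injective hab
        exact congrArg Prod.snd h2
      have hgadd : ∀ x y, h.symm (0, x) + h.symm (0, y) = h.symm (0, x + y) := by
        intro x y; rw [← map_add, Prod.mk_add_mk, add_zero]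
      obtain ⟨εK, hεKpair, hεKmul, hεKdiag⟩ :=
        ih (⨁ (k : {i : ι // i ≠ i₀}), ZMod (n k.1)) hcardK
          (fun x y => γ (h.symm (0, x)) (h.symm (0, y)))
          (fun x => q (h.symm (0, x)))
          ⟨fun x y => hγ.1 _ _,
            fun a b c => by dsimp only; rw [← hgadd, hγ.2.1],
            fun a b c => by dsimp only; rw [← hgadd, hγ.2.2]⟩
          (fun x y => hsym _ _)
          (fun x => hqabs _)
          (fun x => by
            rw [show ((0 : ZMod (n i₀)), -x) = -((0 : ZMod (n i₀)), x) by
              rw [Prod.neg_mk, neg_zero], map_neg, hqneg])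
          (fun x y => by rw [← hgadd]; exact hqγ _ _)
          (fun x => by
            have := addOrderOf_injective gK hgKinj x
            rw [hgK] at this
            rw [← this]; exact hpow _)
      exact step J (n i₀) _ h γ q hγ hsym hqabs hqneg hqγ hpow εK hεKpair hεKmul hεKdiag

end Stmt6Aux

open Stmt6Aux in
/-- Lemma 3 (abstract form).  Let `⟨·,·⟩` be a symmetric pairing on the finite
abelian group `J` and let `q : J → 𝕋` satisfy `q(-j) = q(j)` and
`⟨j,j'⟩ = q(j)q(j')conj(q(j+j'))`.  Call `j` quaternionic if `q(j)^N = -1`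
with `N = ord(j)`.  Then: (i) `J` has no quaternionic element iff there is a
pairing `ε` with `⟨j,j'⟩ ε(j,j') ε(j',j) = 1` and `ε(j,j) = q(j)`;
(ii) given one solution `ε⁰`, a pairing `ε` is a solution iff `ε · conj ε⁰`
is an alternating pairing. -/
theorem stmt6 {J : Type*} [AddCommGroup J] [Fintype J]
    (γ : J → J → ℂ) (q : J → ℂ)
    (hγ : IsPairing γ) (hsym : ∀ j j', γ j j' = γ j' j)
    (hqabs : ∀ j, ‖q j‖ = 1)
    (hqneg : ∀ j, q (-j) = q j)
    (hqγ : ∀ j j', γ j j' = q j * q j' * conj (q (j + j'))) :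
    ((¬ ∃ j : J, q j ^ addOrderOf j = -1) ↔
      ∃ ε : J → J → ℂ, IsPairing ε ∧
        (∀ j j', γ j j' * ε j j' * ε j' j = 1) ∧ (∀ j, ε j j = q j)) ∧
    (∀ ε0 : J → J → ℂ, IsPairing ε0 →
      (∀ j j', γ j j' * ε0 j j' * ε0 j' j = 1) → (∀ j, ε0 j j = q j) →
      ∀ ε : J → J → ℂ, IsPairing ε →
        (((∀ j j', γ j j' * ε j j' * ε j' j = 1) ∧ (∀ j, ε j j = q j)) ↔
          IsAlternatingPairing (fun j j' => ε j j' * conj (ε0 j j')))) := by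
  constructor
  · constructor
    · -- no quaternionic element → ε exists
      intro hq
      classical
      have hpow : ∀ j : J, q j ^ addOrderOf j = 1 := by
        intro j
        have h1 : γ j j ^ addOrderOf j = 1 := by
          rw [← pairing_nsmul_left hγ, addOrderOf_nsmul_eq_zero, pairing_zero_left hγ]
        rw [gamma_diag hγ hqabs hqneg hqγ, ← map_pow] at h1
        have h2 : (q j ^ 2) ^ addOrderOf j = 1 := by
          have h3 := congrArg conj h1
          rwa [Complex.conj_conj, map_one] at h3
        have h3 : (q j ^ addOrderOf j) * (q j ^ addOrderOf j) = 1 := by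
          rw [← pow_add] at *
          rw [← pow_mul] at h2
          rw [show addOrderOf j + addOrderOf j = 2 * addOrderOf j by ring]
          exact h2
        rcases mul_self_eq_one_iff.mp h3 with h4 | h4
        · exact h4
        · exact absurd ⟨j, h4⟩ hq
      obtain ⟨ι, hfin, n, hn, ⟨f⟩⟩ := AddCommGroup.equiv_directSum_zmod_of_finite' J
      haveI : ∀ i, NeZero (n i) := fun i => ⟨by have := hn i; omega⟩
      haveI : Fintype (⨁ (i : ι), ZMod (n i)) :=
        (inferInstance : Fintype (Π₀ (i : ι), ZMod (n i)))
      obtain ⟨ε₀, hp, hm, hd⟩ :=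
        buildEps (Fintype.card (⨁ (i : ι), ZMod (n i))) (⨁ (i : ι), ZMod (n i)) le_rfl
          (fun a b => γ (f.symm a) (f.symm b)) (fun a => q (f.symm a))
          ⟨fun a b => hγ.1 _ _,
            fun a b c => by dsimp only; rw [map_add, hγ.2.1],
            fun a b c => by dsimp only; rw [map_add, hγ.2.2]⟩
          (fun a b => hsym _ _)
          (fun a => hqabs _)
          (fun a => by rw [map_neg, hqneg])
          (fun a b => by rw [map_add]; exact hqγ _ _)
          (fun a => by
            rw [← AddEquiv.addOrderOf_eq f.symm a]
            exact hpow _)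
      refine ⟨fun j j' => ε₀ (f j) (f j'), ⟨fun a b => hp.1 _ _,
        fun a b c => by dsimp only; rw [map_add, hp.2.1],
        fun a b c => by dsimp only; rw [map_add, hp.2.2], ⟩, fun j j' => ?_, fun j => ?_⟩
      · have h5 := hm (f j) (f j')
        rw [f.symm_apply_apply, f.symm_apply_apply] at h5
        rw [mul_assoc, h5]
        exact unit_mul_conj (hγ.1 j j')
      · have h5 := hd (f j)
        rwa [f.symm_apply_apply] at h5
    · -- ε exists → no quaternionic element
      rintro ⟨ε, hεp, hεmul, hεdiag⟩ ⟨j, hj⟩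
      have h1 : q j ^ addOrderOf j = 1 := by
        rw [← hεdiag j, ← pairing_nsmul_left hεp, addOrderOf_nsmul_eq_zero,
          pairing_zero_left hεp]
      rw [h1] at hj
      norm_num at hj
  · -- part (ii)
    intro ε0 hε0p hε0mul hε0diag ε hεp
    constructor
    · rintro ⟨hεmul, hεdiag⟩
      refine ⟨⟨fun a b => ?_, fun a b c => ?_, fun a b c => ?_⟩, fun g => ?_⟩
      · dsimp only
        rw [norm_mul, Complex.norm_conj, hεp.1, hε0p.1]
        norm_num
      · dsimp only; rw [hεp.2.1, hε0p.2.1, map_mul]; ring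
      · dsimp only; rw [hεp.2.2, hε0p.2.2, map_mul]; ring
      · dsimp only; rw [hεdiag, hε0diag]; exact unit_mul_conj (hqabs g)
    · rintro ⟨hδp, hδ1⟩
      have hδadd1 : ∀ a b c : J, ε (a + b) c * conj (ε0 (a + b) c) =
          (ε a c * conj (ε0 a c)) * (ε b c * conj (ε0 b c)) := hδp.2.1
      have hδadd2 : ∀ a b c : J, ε a (b + c) * conj (ε0 a (b + c)) =
          (ε a b * conj (ε0 a b)) * (ε a c * conj (ε0 a c)) := hδp.2.2
      have hδdiag : ∀ g : J, ε g g * conj (ε0 g g) = 1 := hδ1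
      have hskew : ∀ a b : J, (ε a b * conj (ε0 a b)) * (ε b a * conj (ε0 b a)) = 1 := by
        intro a b
        have e1 := hδdiag (a + b)
        rw [hδadd1 a b (a + b), hδadd2 a a b, hδadd2 b a b, hδdiag a, hδdiag b,
          one_mul, mul_one] at e1
        exact e1
      constructor
      · intro j j'
        have u1 := unit_mul_conj (hε0p.1 j j')
        have u2 := unit_mul_conj (hε0p.1 j' j)
        have e1 := hε0mul j j'
        have e2 := hskew j j'
        linear_combination e1 + (γ j j' * ε0 j j' * ε0 j' j) * e2 -
          (γ j j' * ε j j' * ε j' j * (ε0 j j' * conj (ε0 j j'))) * u2 -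
          (γ j j' * ε j j' * ε j' j) * u1
      · intro j
        have u := unit_mul_conj (hqabs j)
        have e1 := hδdiag j
        rw [hε0diag j] at e1
        linear_combination q j * e1 - ε j j * u
end
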